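/- Let B, C ∈ ℝ^{n×r} and set M = B Cᵀ ∈ ℝ^{n×n}. Then the nuclear norm of M, i.e., the sum Σ_{i=1}^{n} √(μ_i), where μ₁,…,μₙ are the eigenvalues of the real symmetric positive semidefinite matrix Mᵀ M, satisfies Σ_{i=1}^{n} √(μ_i) ≤ (1/2)(‖B‖_F² + ‖C‖_F²). -/

import Mathlib

open Matrix RealInnerProductSpace

private def ecol {n r : ℕ} (B : Matrix (Fin n) (Fin r) ℝ) (k : Fin r) :
    EuclideanSpace ℝ (Fin n) := WithLp.toLp 2 (fun j => B j k)

private lemma dot_self_adjoint {n : ℕ} (A : Matrix (Fin n) (Fin n) ℝ) (a b : Fin n → ℝ) :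
    (A *ᵥ a) ⬝ᵥ (A *ᵥ b) = a ⬝ᵥ ((Aᵀ * A) *ᵥ b) := by
  rw [← mulVec_mulVec, dotProduct_mulVec a, vecMul_transpose]

private lemma eucl_inner_eq_dot {m : ℕ} (x y : EuclideanSpace ℝ (Fin m)) :
    ⟪x, y⟫ = (x : Fin m → ℝ) ⬝ᵥ (y : Fin m → ℝ) := by
  simp [PiLp.inner_apply, dotProduct, mul_comm]

private lemma eucl_norm_sq {m : ℕ} (x : EuclideanSpace ℝ (Fin m)) :
    ‖x‖ ^ 2 = ∑ i, x i ^ 2 := by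
  rw [EuclideanSpace.norm_eq, Real.sq_sqrt (Finset.sum_nonneg fun i _ => sq_nonneg _)]
  simp [Real.norm_eq_abs, sq_abs]

private lemma inner_le_half {m : ℕ} (x y : EuclideanSpace ℝ (Fin m)) :
    ⟪x, y⟫ ≤ (‖x‖ ^ 2 + ‖y‖ ^ 2) / 2 := by
  nlinarith [real_inner_le_norm x y, norm_nonneg x, norm_nonneg y, sq_nonneg (‖x‖ - ‖y‖)]

/-- The nuclear norm of `M = B Cᵀ` (the sum of the square roots of the eigenvalues
of `Mᵀ M`) is at most `(1/2)(‖B‖_F² + ‖C‖_F²)`. -/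
theorem nuclearNorm_mul_transpose_le
    (n r : ℕ) (hn : 0 < n) (hr : 0 < r)
    (B C : Matrix (Fin n) (Fin r) ℝ)
    (M : Matrix (Fin n) (Fin n) ℝ) (hM : M = B * Cᵀ)
    (hH : (Mᵀ * M).IsHermitian) :
    ∑ i : Fin n, Real.sqrt (hH.eigenvalues i) ≤
      (1 / 2) * ((∑ i : Fin n, ∑ k : Fin r, (B i k) ^ 2) +
                 (∑ i : Fin n, ∑ k : Fin r, (C i k) ^ 2)) := by
  classical
  have hpsd : (Mᵀ * M).PosSemidef := by
    have := Matrix.posSemidef_conjTranspose_mul_self M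
    rwa [Matrix.conjTranspose_eq_transpose_of_trivial] at this
  set μ : Fin n → ℝ := hH.eigenvalues with hμdef
  have hμ0 : ∀ i, 0 ≤ μ i := fun i => hpsd.eigenvalues_nonneg i
  set σ : Fin n → ℝ := fun i => Real.sqrt (μ i) with hσdef
  have hσ0 : ∀ i, 0 ≤ σ i := fun i => Real.sqrt_nonneg _
  have hσsq : ∀ i, σ i ^ 2 = μ i := fun i => Real.sq_sqrt (hμ0 i)
  set v : Fin n → EuclideanSpace ℝ (Fin n) := fun i => hH.eigenvectorBasis i with hvdef
  have hvon : Orthonormal ℝ v := hH.eigenvectorBasis.orthonormal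
  set w : Fin n → EuclideanSpace ℝ (Fin n) := fun i => WithLp.toLp 2 (M *ᵥ (v i)) with hwdef
  -- key inner product computation
  have hww : ∀ i j, ⟪w i, w j⟫ = μ j * (if i = j then (1:ℝ) else 0) := by
    intro i j
    have hvv : ⟪v i, v j⟫ = if i = j then (1:ℝ) else 0 := orthonormal_iff_ite.mp hvon i j
    rw [eucl_inner_eq_dot] at hvv ⊢
    show (M *ᵥ (v i)) ⬝ᵥ (M *ᵥ (v j)) = _
    have h2 : (Mᵀ * M) *ᵥ (v j : Fin n → ℝ) = μ j • (v j : Fin n → ℝ) :=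
      hH.mulVec_eigenvectorBasis j
    rw [dot_self_adjoint, h2, dotProduct_smul, smul_eq_mul, hvv]
  have hwii : ∀ i, ⟪w i, w i⟫ = μ i := by intro i; rw [hww]; simp
  set s : Finset (Fin n) := Finset.univ.filter (fun i => μ i ≠ 0) with hsdef
  have hσpos : ∀ i ∈ s, 0 < σ i := by
    intro i hi
    have h1 : μ i ≠ 0 := (Finset.mem_filter.mp hi).2
    exact Real.sqrt_pos.mpr (lt_of_le_of_ne (hμ0 i) (Ne.symm h1))
  set u : Fin n → EuclideanSpace ℝ (Fin n) := fun i => (σ i)⁻¹ • w i with hudef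
  have huon : Orthonormal ℝ (fun i : ↥s => u i) := by
    rw [orthonormal_iff_ite]
    intro i j
    show ⟪(σ (i:Fin n))⁻¹ • w i, (σ (j:Fin n))⁻¹ • w j⟫ = _
    rw [real_inner_smul_left, real_inner_smul_right, hww]
    rcases eq_or_ne i j with h | h
    · subst h
      have hσi := hσpos i i.2
      simp only [if_pos rfl, if_pos rfl, mul_one]
      rw [← hσsq i]
      field_simp
    · have : (i : Fin n) ≠ (j : Fin n) := fun hc => h (Subtype.ext hc)
      simp [this, h]
  -- p and q
  set p : Fin n → EuclideanSpace ℝ (Fin r) := fun i => WithLp.toLp 2 (Bᵀ *ᵥ (u i)) with hpdef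
  set q : Fin n → EuclideanSpace ℝ (Fin r) := fun i => WithLp.toLp 2 (Cᵀ *ᵥ (v i)) with hqdef
  have hkey : ∀ i ∈ s, σ i = ⟪p i, q i⟫ := by
    intro i hi
    have h1 : ⟪u i, w i⟫ = σ i := by
      show ⟪(σ i)⁻¹ • w i, w i⟫ = σ i
      rw [real_inner_smul_left, hwii, ← hσsq i]
      have := (hσpos i hi).ne'
      field_simp
    have h2 : ⟪u i, w i⟫ = ⟪p i, q i⟫ := by
      rw [eucl_inner_eq_dot, eucl_inner_eq_dot]
      show (u i : Fin n → ℝ) ⬝ᵥ (M *ᵥ (v i)) = (Bᵀ *ᵥ (u i)) ⬝ᵥ (Cᵀ *ᵥ (v i))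
      rw [hM, ← mulVec_mulVec, dotProduct_mulVec (u i : Fin n → ℝ), ← mulVec_transpose]
    rw [← h1, h2]
  -- reduce sum to s
  have hsum0 : ∑ i : Fin n, σ i = ∑ i ∈ s, σ i := by
    refine (Finset.sum_subset (Finset.subset_univ s) ?_).symm
    intro i _ hi
    have : μ i = 0 := by
      by_contra hne
      exact hi (Finset.mem_filter.mpr ⟨Finset.mem_univ i, hne⟩)
    simp [hσdef, this]
  -- Bessel bounds
  have hBessel_p : ∑ i ∈ s, ‖p i‖ ^ 2 ≤ ∑ i : Fin n, ∑ k : Fin r, (B i k) ^ 2 := by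
    have hpt : ∀ i, ‖p i‖ ^ 2 = ∑ k : Fin r, ⟪u i, ecol B k⟫ ^ 2 := by
      intro i
      rw [eucl_norm_sq]
      refine Finset.sum_congr rfl fun k _ => ?_
      rw [eucl_inner_eq_dot]
      congr 1
      show (Bᵀ *ᵥ (u i)) k = (u i : Fin n → ℝ) ⬝ᵥ (ecol B k : Fin n → ℝ)
      simp [ecol, mulVec, dotProduct, mul_comm]
    calc ∑ i ∈ s, ‖p i‖ ^ 2
        = ∑ k : Fin r, ∑ i ∈ s, ⟪u i, ecol B k⟫ ^ 2 := by
          rw [← Finset.sum_comm]; exact Finset.sum_congr rfl fun i _ => hpt i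
      _ ≤ ∑ k : Fin r, ‖ecol B k‖ ^ 2 := by
          refine Finset.sum_le_sum fun k _ => ?_
          have hb := huon.sum_inner_products_le
            (x := ecol B k) (s := Finset.univ)
          calc ∑ i ∈ s, ⟪u i, ecol B k⟫ ^ 2
              = ∑ i : ↥s, ⟪u (i : Fin n), ecol B k⟫ ^ 2 :=
                (Finset.sum_coe_sort s _).symm
            _ ≤ _ := by
                refine le_trans (le_of_eq ?_) hb
                refine Finset.sum_congr rfl fun i _ => ?_
                rw [Real.norm_eq_abs, sq_abs]
      _ = ∑ i : Fin n, ∑ k : Fin r, (B i k) ^ 2 := by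
          rw [Finset.sum_comm]
          refine Finset.sum_congr rfl fun k _ => ?_
          rw [eucl_norm_sq]
          simp [ecol]
  have hBessel_q : ∑ i ∈ s, ‖q i‖ ^ 2 ≤ ∑ i : Fin n, ∑ k : Fin r, (C i k) ^ 2 := by
    have hvon' : Orthonormal ℝ (fun i : ↥s => v i) := hvon.comp _ Subtype.val_injective
    have hqt : ∀ i, ‖q i‖ ^ 2 = ∑ k : Fin r, ⟪v i, ecol C k⟫ ^ 2 := by
      intro i
      rw [eucl_norm_sq]
      refine Finset.sum_congr rfl fun k _ => ?_
      rw [eucl_inner_eq_dot]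
      congr 1
      show (Cᵀ *ᵥ (v i)) k = (v i : Fin n → ℝ) ⬝ᵥ (ecol C k : Fin n → ℝ)
      simp [ecol, mulVec, dotProduct, mul_comm]
    calc ∑ i ∈ s, ‖q i‖ ^ 2
        = ∑ k : Fin r, ∑ i ∈ s, ⟪v i, ecol C k⟫ ^ 2 := by
          rw [← Finset.sum_comm]; exact Finset.sum_congr rfl fun i _ => hqt i
      _ ≤ ∑ k : Fin r, ‖ecol C k‖ ^ 2 := by
          refine Finset.sum_le_sum fun k _ => ?_
          have hb := hvon'.sum_inner_products_le
            (x := ecol C k) (s := Finset.univ)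
          calc ∑ i ∈ s, ⟪v i, ecol C k⟫ ^ 2
              = ∑ i : ↥s, ⟪v (i : Fin n), ecol C k⟫ ^ 2 :=
                (Finset.sum_coe_sort s _).symm
            _ ≤ _ := by
                refine le_trans (le_of_eq ?_) hb
                refine Finset.sum_congr rfl fun i _ => ?_
                rw [Real.norm_eq_abs, sq_abs]
      _ = ∑ i : Fin n, ∑ k : Fin r, (C i k) ^ 2 := by
          rw [Finset.sum_comm]
          refine Finset.sum_congr rfl fun k _ => ?_
          rw [eucl_norm_sq]
          simp [ecol]
  -- put it together
  calc ∑ i : Fin n, σ i = ∑ i ∈ s, σ i := hsum0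
    _ ≤ ∑ i ∈ s, (‖p i‖ ^ 2 + ‖q i‖ ^ 2) / 2 := by
        refine Finset.sum_le_sum fun i hi => ?_
        rw [hkey i hi]
        exact inner_le_half _ _
    _ = (1 / 2) * ((∑ i ∈ s, ‖p i‖ ^ 2) + (∑ i ∈ s, ‖q i‖ ^ 2)) := by
        rw [← Finset.sum_add_distrib]
        rw [Finset.mul_sum]
        exact Finset.sum_congr rfl fun i _ => by ring
    _ ≤ (1 / 2) * ((∑ i : Fin n, ∑ k : Fin r, (B i k) ^ 2) +
                 (∑ i : Fin n, ∑ k : Fin r, (C i k) ^ 2)) := by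
        have := add_le_add hBessel_p hBessel_q
        linarith
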